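/- Fix a > 0 and define D : ℝ^{d×N} → ℝ^{d×N} by D(T) = T / (1 + |T|^a)^{1/a}. Then D is C¹ and for all T, B ∈ ℝ^{d×N} one has h(|T|)|B|² ≤ (B,B)_{A(T)} ≤ C₂ |B|² / (1 + |T|), where h(s) = (1 + s^a)^{−1−1/a} and C₂ = max{1, 2^{1−1/a}}, and A(T) is the derivative tensor of D at T. -/

import Mathlib

open MeasureTheory Filter Topology Set

noncomputable section

/-- The space of real `d × N` matrices with the Frobenius (Euclidean) inner product. -/
abbrev Mat (d N : ℕ) := EuclideanSpace ℝ (Fin d × Fin N)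

/-- The prototypical nonlinearity `D(T) = T / (1 + |T|^a)^{1/a}`. -/
noncomputable def protoD (d N : ℕ) (a : ℝ) (T : Mat d N) : Mat d N :=
  ((1 + ‖T‖ ^ a) ^ (1 / a))⁻¹ • T

namespace ProtoDAux

/-- the scalar coefficient as a function of the squared norm -/
noncomputable def phiA (a u : ℝ) : ℝ := ((1 + u ^ (a / 2)) ^ (1 / a))⁻¹

/-- its derivative (for `u > 0`) -/
noncomputable def phiA' (a u : ℝ) : ℝ :=
  -(1 / 2) * (1 + u ^ (a / 2)) ^ (-(1 / a) - 1) * u ^ (a / 2 - 1)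

/-- the candidate derivative of `protoD` -/
noncomputable def Aop (d N : ℕ) (a : ℝ) (T : Mat d N) : Mat d N →L[ℝ] Mat d N :=
  phiA a (‖T‖ ^ 2) • ContinuousLinearMap.id ℝ (Mat d N) +
    (2 * phiA' a (‖T‖ ^ 2)) • ((innerSL ℝ T).smulRight T)

variable {a : ℝ}

lemma sq_rpow_half {x : ℝ} (hx : 0 ≤ x) (b : ℝ) : (x ^ 2) ^ (b / 2) = x ^ b := by
  rw [← Real.rpow_natCast x 2, ← Real.rpow_mul hx]
  congr 1
  push_cast
  ring

lemma protoD_eq (d N : ℕ) (a : ℝ) :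
    protoD d N a = fun T : Mat d N => phiA a (‖T‖ ^ 2) • T := by
  funext T
  rw [protoD, phiA, sq_rpow_half (norm_nonneg T)]

lemma hasDerivAt_phiA (ha : 0 < a) {u : ℝ} (hu : 0 < u) :
    HasDerivAt (phiA a) (phiA' a u) u := by
  have hv : (0:ℝ) < 1 + u ^ (a / 2) := by positivity
  have h1 : HasDerivAt (fun u : ℝ => 1 + u ^ (a / 2))
      (a / 2 * u ^ (a / 2 - 1)) u :=
    (Real.hasDerivAt_rpow_const (Or.inl hu.ne')).const_add 1
  have h3 : HasDerivAt (fun v : ℝ => v ^ (1 / a))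
      (1 / a * (1 + u ^ (a / 2)) ^ (1 / a - 1)) (1 + u ^ (a / 2)) :=
    Real.hasDerivAt_rpow_const (Or.inl hv.ne')
  have h4 := h3.comp u h1
  have h5 := h4.inv (by positivity : (1 + u ^ (a / 2)) ^ (1 / a) ≠ 0)
  refine HasDerivAt.congr_deriv (f := phiA a) h5 ?_
  symm
  have hsq : ((1 + u ^ (a / 2)) ^ (1 / a)) ^ 2 = (1 + u ^ (a / 2)) ^ (2 / a) := by
    rw [← Real.rpow_natCast ((1 + u ^ (a / 2)) ^ (1 / a)) 2, ← Real.rpow_mul hv.le]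
    congr 1
    push_cast
    ring
  rw [Function.comp_def, hsq, phiA',
    show (-(1 / a) - 1 : ℝ) = (1 / a - 1) + -(2 / a) by ring,
    Real.rpow_add hv, Real.rpow_neg hv.le]
  field_simp

lemma phiA_zero (ha : 0 < a) : phiA a 0 = 1 := by
  rw [phiA, Real.zero_rpow (by positivity : a / 2 ≠ 0)]
  norm_num

lemma continuousAt_phiA (ha : 0 < a) {u : ℝ} (hu : 0 ≤ u) : ContinuousAt (phiA a) u := by
  have hv : (0:ℝ) < 1 + u ^ (a / 2) := by positivity
  have h1 : ContinuousAt (fun u : ℝ => 1 + u ^ (a / 2)) u :=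
    continuousAt_const.add (Real.continuousAt_rpow_const u (a / 2) (Or.inr (by positivity)))
  have h2 : ContinuousAt (fun v : ℝ => (v ^ (1 / a))⁻¹) (1 + u ^ (a / 2)) :=
    (Real.continuousAt_rpow_const _ (1 / a) (Or.inl hv.ne')).inv₀ (by positivity)
  exact ContinuousAt.comp (g := fun v : ℝ => (v ^ (1 / a))⁻¹)
    (f := fun u : ℝ => 1 + u ^ (a / 2)) (x := u) h2 h1

lemma continuousAt_phiA' (ha : 0 < a) {u : ℝ} (hu : 0 < u) : ContinuousAt (phiA' a) u := by
  have hv : (0:ℝ) < 1 + u ^ (a / 2) := by positivity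
  have h1 : ContinuousAt (fun u : ℝ => 1 + u ^ (a / 2)) u :=
    continuousAt_const.add (Real.continuousAt_rpow_const u (a / 2) (Or.inr (by positivity)))
  have h2 : ContinuousAt (fun v : ℝ => v ^ (-(1 / a) - 1)) (1 + u ^ (a / 2)) :=
    Real.continuousAt_rpow_const _ _ (Or.inl hv.ne')
  have hmid : ContinuousAt (fun u : ℝ => (1 + u ^ (a / 2)) ^ (-(1 / a) - 1)) u :=
    ContinuousAt.comp (g := fun v : ℝ => v ^ (-(1 / a) - 1))
      (f := fun u : ℝ => 1 + u ^ (a / 2)) (x := u) h2 h1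
  have h4 : ContinuousAt
      (fun u : ℝ => -(1 / 2) * (1 + u ^ (a / 2)) ^ (-(1 / a) - 1) * u ^ (a / 2 - 1)) u :=
    (continuousAt_const.mul hmid).mul (Real.continuousAt_rpow_const u _ (Or.inl hu.ne'))
  exact h4

section Main

variable (d N : ℕ)

lemma continuous_rankOne : Continuous fun T : Mat d N => (innerSL ℝ T).smulRight T := by
  have hb := (ContinuousLinearMap.smulRightL ℝ (Mat d N) (Mat d N)).isBoundedBilinearMap.continuous
  exact hb.comp ((innerSL ℝ (E := Mat d N)).continuous.prodMk continuous_id)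

lemma hasFDerivAt_protoD (ha : 0 < a) (T : Mat d N) :
    HasFDerivAt (protoD d N a) (Aop d N a T) T := by
  rcases eq_or_ne T 0 with rfl | hT
  · -- derivative at zero
    have hAop : Aop d N a 0 = ContinuousLinearMap.id ℝ (Mat d N) := by
      ext B
      simp [Aop, phiA_zero ha]
    rw [hAop, protoD_eq, hasFDerivAt_iff_isLittleO_nhds_zero]
    simp only [zero_add, norm_zero, ne_eq, OfNat.ofNat_ne_zero, not_false_eq_true, zero_pow,
      ContinuousLinearMap.coe_id', id_eq]
    have hz : (fun h : Mat d N => phiA a (‖h‖ ^ 2) • h - phiA a (0:ℝ) • (0 : Mat d N) - h)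
        = fun h : Mat d N => (phiA a (‖h‖ ^ 2) - 1) • h := by
      funext h
      rw [sub_smul, one_smul, smul_zero, sub_zero]
    rw [hz]
    rw [Asymptotics.isLittleO_iff]
    intro c hc
    have hcont : Tendsto (fun h : Mat d N => phiA a (‖h‖ ^ 2) - 1) (𝓝 0) (𝓝 0) := by
      have h1 : Tendsto (fun h : Mat d N => phiA a (‖h‖ ^ 2)) (𝓝 0) (𝓝 1) := by
        have hn : Tendsto (fun h : Mat d N => ‖h‖ ^ 2) (𝓝 0) (𝓝 (0:ℝ)) := by
          simpa using (show Continuous fun h : Mat d N => ‖h‖ ^ 2 from continuous_norm.pow 2).tendsto (0 : Mat d N)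
        have := Filter.Tendsto.comp ((continuousAt_phiA ha (le_refl (0:ℝ)))) hn
        simpa [Function.comp_def, phiA_zero ha] using this
      simpa using h1.sub (tendsto_const_nhds : Tendsto (fun _ : Mat d N => (1:ℝ)) (𝓝 0) (𝓝 1))
    filter_upwards [NormedAddCommGroup.tendsto_nhds_zero.mp hcont c hc] with h hh
    calc ‖(phiA a (‖h‖ ^ 2) - 1) • h‖ ≤ ‖phiA a (‖h‖ ^ 2) - 1‖ * ‖h‖ := norm_smul_le _ _
      _ ≤ c * ‖h‖ := mul_le_mul_of_nonneg_right (le_of_lt hh) (norm_nonneg h)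
  · -- derivative away from zero
    have hT2 : (0:ℝ) < ‖T‖ ^ 2 := pow_pos (norm_pos_iff.mpr hT) 2
    have hq : HasFDerivAt (fun T : Mat d N => ‖T‖ ^ 2) ((2:ℝ) • innerSL ℝ T) T := by
      have h0 := (hasStrictFDerivAt_norm_sq T).hasFDerivAt
      rw [two_smul]; rw [two_nsmul] at h0; exact h0
    have hc : HasFDerivAt (fun T : Mat d N => phiA a (‖T‖ ^ 2))
        (phiA' a (‖T‖ ^ 2) • ((2:ℝ) • innerSL ℝ T)) T :=
      HasDerivAt.comp_hasFDerivAt (h₂ := phiA a) (f := fun T : Mat d N => ‖T‖ ^ 2) T (hasDerivAt_phiA ha hT2) hq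
    have h := hc.smul (hasFDerivAt_id T)
    rw [protoD_eq]
    refine h.congr_fderiv ?_
    refine ContinuousLinearMap.ext fun B => ?_
    simp only [Aop, ContinuousLinearMap.add_apply, ContinuousLinearMap.smul_apply,
      ContinuousLinearMap.coe_id', id_eq, ContinuousLinearMap.smulRight_apply,
      innerSL_apply_apply, smul_eq_mul]
    module

lemma two_phiA'_bound (ha : 0 < a) (T : Mat d N) :
    |2 * phiA' a (‖T‖ ^ 2)| * (‖T‖ * ‖T‖) ≤ ‖T‖ ^ a := by
  rcases eq_or_ne T 0 with rfl | hT
  · simp [Real.rpow_nonneg]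
  · have hs : (0:ℝ) < ‖T‖ := norm_pos_iff.mpr hT
    have habs : |2 * phiA' a (‖T‖ ^ 2)|
        = (1 + (‖T‖ ^ 2) ^ (a / 2)) ^ (-(1 / a) - 1) * (‖T‖ ^ 2) ^ (a / 2 - 1) := by
      rw [phiA']
      rw [abs_of_nonpos (by
        have h1 : (0:ℝ) ≤ (1 + (‖T‖ ^ 2) ^ (a / 2)) ^ (-(1 / a) - 1) :=
          Real.rpow_nonneg (by positivity) _
        have h2 : (0:ℝ) ≤ (‖T‖ ^ 2) ^ (a / 2 - 1) := Real.rpow_nonneg (by positivity) _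
        nlinarith)]
      ring
    rw [habs]
    have h1 : (1 + (‖T‖ ^ 2) ^ (a / 2)) ^ (-(1 / a) - 1) ≤ 1 :=
      Real.rpow_le_one_of_one_le_of_nonpos
        (by nlinarith [Real.rpow_nonneg (by positivity : (0:ℝ) ≤ ‖T‖ ^ 2) (a / 2)])
        (by nlinarith [one_div_pos.mpr ha])
    have h2 : (‖T‖ ^ 2) ^ (a / 2 - 1) * (‖T‖ * ‖T‖) = ‖T‖ ^ a := by
      have e1 : ‖T‖ * ‖T‖ = ‖T‖ ^ (2:ℝ) := by
        rw [Real.rpow_two]; ring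
      rw [← Real.rpow_natCast ‖T‖ 2, ← Real.rpow_mul (norm_nonneg T), e1, ← Real.rpow_add hs]
      congr 1
      push_cast
      ring
    calc (1 + (‖T‖ ^ 2) ^ (a / 2)) ^ (-(1 / a) - 1) * (‖T‖ ^ 2) ^ (a / 2 - 1) * (‖T‖ * ‖T‖)
        ≤ 1 * ((‖T‖ ^ 2) ^ (a / 2 - 1) * (‖T‖ * ‖T‖)) := by
          rw [mul_assoc]
          exact mul_le_mul_of_nonneg_right h1 (by positivity)
      _ = ‖T‖ ^ a := by rw [one_mul, h2]

lemma norm_Aop_sub_id_le (ha : 0 < a) (T : Mat d N) :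
    ‖Aop d N a T - ContinuousLinearMap.id ℝ (Mat d N)‖
      ≤ |phiA a (‖T‖ ^ 2) - 1| + ‖T‖ ^ a := by
  refine ContinuousLinearMap.opNorm_le_bound _ (by positivity) fun B => ?_
  have happ : (Aop d N a T - ContinuousLinearMap.id ℝ (Mat d N)) B
      = (phiA a (‖T‖ ^ 2) - 1) • B +
        (2 * phiA' a (‖T‖ ^ 2)) • (((inner ℝ T B : ℝ)) • T) := by
    simp only [Aop, ContinuousLinearMap.sub_apply, ContinuousLinearMap.add_apply,
      ContinuousLinearMap.smul_apply, ContinuousLinearMap.coe_id', id_eq,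
      ContinuousLinearMap.smulRight_apply, innerSL_apply_apply, sub_smul, one_smul]
    module
  have hinner : |(inner ℝ T B : ℝ)| ≤ ‖T‖ * ‖B‖ := abs_real_inner_le_norm T B
  calc ‖(Aop d N a T - ContinuousLinearMap.id ℝ (Mat d N)) B‖
      ≤ ‖(phiA a (‖T‖ ^ 2) - 1) • B‖ +
        ‖(2 * phiA' a (‖T‖ ^ 2)) • (((inner ℝ T B : ℝ)) • T)‖ := by
        rw [happ]; exact norm_add_le _ _
    _ = |phiA a (‖T‖ ^ 2) - 1| * ‖B‖ +
        |2 * phiA' a (‖T‖ ^ 2)| * (|(inner ℝ T B : ℝ)| * ‖T‖) := by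
        rw [norm_smul, norm_smul, norm_smul]
        simp only [Real.norm_eq_abs]
    _ ≤ |phiA a (‖T‖ ^ 2) - 1| * ‖B‖ +
        |2 * phiA' a (‖T‖ ^ 2)| * ((‖T‖ * ‖B‖) * ‖T‖) := by
        gcongr
    _ = |phiA a (‖T‖ ^ 2) - 1| * ‖B‖ +
        (|2 * phiA' a (‖T‖ ^ 2)| * (‖T‖ * ‖T‖)) * ‖B‖ := by ring
    _ ≤ |phiA a (‖T‖ ^ 2) - 1| * ‖B‖ + ‖T‖ ^ a * ‖B‖ := by
        gcongr
        exact two_phiA'_bound d N ha T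
    _ = (|phiA a (‖T‖ ^ 2) - 1| + ‖T‖ ^ a) * ‖B‖ := by ring

lemma continuous_Aop (ha : 0 < a) : Continuous (Aop d N a) := by
  rw [continuous_iff_continuousAt]
  intro T
  rcases eq_or_ne T 0 with rfl | hT
  · -- at zero
    have hb : Tendsto (fun T : Mat d N => |phiA a (‖T‖ ^ 2) - 1| + ‖T‖ ^ a) (𝓝 0) (𝓝 0) := by
      have h1 : Tendsto (fun T : Mat d N => |phiA a (‖T‖ ^ 2) - 1|) (𝓝 0) (𝓝 0) := by
        have h1' : Tendsto (fun T : Mat d N => phiA a (‖T‖ ^ 2)) (𝓝 0) (𝓝 1) := by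
          have hn : Tendsto (fun h : Mat d N => ‖h‖ ^ 2) (𝓝 0) (𝓝 (0:ℝ)) := by
            simpa using (show Continuous fun h : Mat d N => ‖h‖ ^ 2 from continuous_norm.pow 2).tendsto (0 : Mat d N)
          have := Filter.Tendsto.comp ((continuousAt_phiA ha (le_refl (0:ℝ)))) hn
          simpa [Function.comp_def, phiA_zero ha] using this
        simpa using (h1'.sub (tendsto_const_nhds : Tendsto (fun _ : Mat d N => (1:ℝ)) (𝓝 0) (𝓝 1))).abs
      have h2 : Tendsto (fun T : Mat d N => ‖T‖ ^ a) (𝓝 0) (𝓝 0) := by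
        have hn : Tendsto (fun T : Mat d N => ‖T‖) (𝓝 0) (𝓝 (0:ℝ)) := by
          simpa using continuous_norm.tendsto (0 : Mat d N)
        have := Filter.Tendsto.comp (Real.continuousAt_rpow_const 0 a (Or.inr ha.le)) hn
        simpa [Function.comp_def, Real.zero_rpow ha.ne'] using this
      simpa using h1.add h2
    have htend : Tendsto (fun T : Mat d N => Aop d N a T - ContinuousLinearMap.id ℝ (Mat d N))
        (𝓝 0) (𝓝 0) :=
      squeeze_zero_norm (norm_Aop_sub_id_le d N ha) hb
    have hAop0 : Aop d N a 0 = ContinuousLinearMap.id ℝ (Mat d N) := by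
      ext B; simp [Aop, phiA_zero ha]
    have := htend.add_const (ContinuousLinearMap.id ℝ (Mat d N))
    simpa [ContinuousAt, hAop0] using this
  · have hT2 : (0:ℝ) < ‖T‖ ^ 2 := pow_pos (norm_pos_iff.mpr hT) 2
    have hn : ContinuousAt (fun T : Mat d N => ‖T‖ ^ 2) T := (continuous_norm.pow 2).continuousAt
    have hphic : ContinuousAt (fun T : Mat d N => phiA a (‖T‖ ^ 2)) T :=
      ContinuousAt.comp (g := phiA a) (f := fun T : Mat d N => ‖T‖ ^ 2) (x := T)
        (continuousAt_phiA ha hT2.le) hn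
    have hphic' : ContinuousAt (fun T : Mat d N => phiA' a (‖T‖ ^ 2)) T :=
      ContinuousAt.comp (g := phiA' a) (f := fun T : Mat d N => ‖T‖ ^ 2) (x := T)
        (continuousAt_phiA' ha hT2) hn
    refine ContinuousAt.add ?_ ?_
    · exact hphic.smul continuousAt_const
    · exact (continuousAt_const.mul hphic').smul (continuous_rankOne d N).continuousAt

end Main

/-- Real version of `(1+s)^a ≤ 1 + s^a` for `a ≤ 1`, and the `2^{a-1}` version for `a ≥ 1`,
combined into the needed bound. -/
lemma one_add_le_C2_mul (ha : 0 < a) {s : ℝ} (hs : 0 ≤ s) :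
    1 + s ≤ max 1 (2 ^ (1 - 1 / a)) * (1 + s ^ a) ^ (1 / a) := by
  have hv : (0:ℝ) < 1 + s ^ a := by positivity
  have h1s : (0:ℝ) ≤ 1 + s := by linarith
  rcases le_total a 1 with h | h
  · -- subadditive case
    have key : (1 + s) ^ a ≤ 1 + s ^ a := by
      have := NNReal.rpow_add_le_add_rpow 1 s.toNNReal ha.le h
      rw [← NNReal.coe_le_coe] at this
      push_cast at this
      simpa [Real.coe_toNNReal s hs] using this
    have h2 : 1 + s ≤ (1 + s ^ a) ^ (1 / a) := by
      have := Real.rpow_le_rpow (by positivity) key (by positivity : (0:ℝ) ≤ 1 / a)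
      rwa [← Real.rpow_mul h1s, mul_one_div, div_self ha.ne', Real.rpow_one] at this
    calc 1 + s ≤ (1 + s ^ a) ^ (1 / a) := h2
      _ = 1 * (1 + s ^ a) ^ (1 / a) := (one_mul _).symm
      _ ≤ max 1 (2 ^ (1 - 1 / a)) * (1 + s ^ a) ^ (1 / a) :=
          mul_le_mul_of_nonneg_right (le_max_left _ _) (Real.rpow_nonneg hv.le _)
  · -- convexity case
    have key : (1 + s) ^ a ≤ 2 ^ (a - 1) * (1 + s ^ a) := by
      have := NNReal.rpow_add_le_mul_rpow_add_rpow 1 s.toNNReal h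
      rw [← NNReal.coe_le_coe] at this
      push_cast at this
      simpa [Real.coe_toNNReal s hs] using this
    have h2 : 1 + s ≤ 2 ^ (1 - 1 / a) * (1 + s ^ a) ^ (1 / a) := by
      have h3 := Real.rpow_le_rpow (by positivity) key (by positivity : (0:ℝ) ≤ 1 / a)
      rw [← Real.rpow_mul h1s, mul_one_div, div_self ha.ne', Real.rpow_one,
        Real.mul_rpow (by positivity) hv.le, ← Real.rpow_mul (by norm_num)] at h3
      rwa [show (a - 1) * (1 / a) = 1 - 1 / a by field_simp] at h3
    exact h2.trans (mul_le_mul_of_nonneg_right (le_max_right _ _) (Real.rpow_nonneg hv.le _))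

end ProtoDAux

open ProtoDAux in
/-- For `a > 0`, the mapping `D(T) = T / (1 + |T|^a)^{1/a}` is `C¹` and satisfies
`h(|T|)|B|² ≤ (B,B)_{A(T)} ≤ C₂|B|²/(1+|T|)` with `h(s) = (1+s^a)^{−1−1/a}` and
`C₂ = max{1, 2^{1−1/a}}`, where `A(T)` is the derivative of `D` at `T`. -/
theorem protoD_h_monotone (d N : ℕ) (hd : 1 ≤ d) (hN : 1 ≤ N) (a : ℝ) (ha : 0 < a) :
    ContDiff ℝ 1 (protoD d N a) ∧
      ∀ T B : Mat d N,
        (1 + ‖T‖ ^ a) ^ (-(1 + 1 / a)) * ‖B‖ ^ 2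
            ≤ (inner ℝ (fderiv ℝ (protoD d N a) T B) B : ℝ) ∧
          (inner ℝ (fderiv ℝ (protoD d N a) T B) B : ℝ)
            ≤ max 1 (2 ^ (1 - 1 / a)) * ‖B‖ ^ 2 / (1 + ‖T‖) := by
  have hA := hasFDerivAt_protoD d N ha
  have hfd : fderiv ℝ (protoD d N a) = Aop d N a := funext fun T => (hA T).fderiv
  refine ⟨contDiff_one_iff_fderiv.mpr ⟨fun T => (hA T).differentiableAt, by
    rw [hfd]; exact continuous_Aop d N ha⟩, ?_⟩
  intro T B
  rw [hfd]
  set s := ‖T‖ with hs_def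
  have hs : 0 ≤ s := norm_nonneg T
  have hv : (0:ℝ) < 1 + s ^ a := by positivity
  set p : ℝ := inner ℝ T B with hp_def
  -- the quadratic form
  have hform : (inner ℝ (Aop d N a T B) B : ℝ)
      = phiA a (s ^ 2) * ‖B‖ ^ 2 + (2 * phiA' a (s ^ 2)) * p ^ 2 := by
    simp only [Aop, ContinuousLinearMap.add_apply, ContinuousLinearMap.smul_apply,
      ContinuousLinearMap.coe_id', id_eq, ContinuousLinearMap.smulRight_apply,
      innerSL_apply_apply, inner_add_left, real_inner_smul_left, real_inner_self_eq_norm_sq]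
    rw [← hp_def]
    ring
  have hphi : phiA a (s ^ 2) = (1 + s ^ a) ^ (-(1 / a)) := by
    rw [phiA, sq_rpow_half hs, Real.rpow_neg hv.le]
  have hphi' : 2 * phiA' a (s ^ 2) = -((1 + s ^ a) ^ (-(1 / a) - 1) * (s ^ 2) ^ (a / 2 - 1)) := by
    rw [phiA', sq_rpow_half hs]; ring
  have hw : (0:ℝ) ≤ (1 + s ^ a) ^ (-(1 / a) - 1) := Real.rpow_nonneg hv.le _
  have hu : (0:ℝ) ≤ (s ^ 2) ^ (a / 2 - 1) := Real.rpow_nonneg (by positivity) _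
  constructor
  · -- lower bound
    have key1 : (s ^ 2) ^ (a / 2 - 1) * p ^ 2 ≤ s ^ a * ‖B‖ ^ 2 := by
      rcases eq_or_lt_of_le hs with h0 | h0
      · have hT0 : T = 0 := norm_eq_zero.mp h0.symm
        have hp0 : p = 0 := by rw [hp_def, hT0, inner_zero_left]
        rw [hp0, ← h0, Real.zero_rpow ha.ne']
        norm_num
      · have hcs : p ^ 2 ≤ s ^ 2 * ‖B‖ ^ 2 := by
          have := abs_real_inner_le_norm T B
          rw [← hp_def, ← hs_def] at this
          nlinarith [abs_nonneg p, abs_mul_abs_self p]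
        have e3 : (s ^ 2) ^ (a / 2 - 1) * s ^ 2 = s ^ a := by
          rw [← Real.rpow_natCast s 2, ← Real.rpow_mul hs, ← Real.rpow_add h0]
          congr 1
          push_cast
          ring
        have hmul : (s ^ 2) ^ (a / 2 - 1) * (s ^ 2 * ‖B‖ ^ 2) = s ^ a * ‖B‖ ^ 2 := by
          rw [← mul_assoc, e3]
        calc (s ^ 2) ^ (a / 2 - 1) * p ^ 2 ≤ (s ^ 2) ^ (a / 2 - 1) * (s ^ 2 * ‖B‖ ^ 2) :=
              mul_le_mul_of_nonneg_left hcs hu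
          _ = s ^ a * ‖B‖ ^ 2 := hmul
    rw [hform, hphi, hphi']
    have e1 : (1 + s ^ a) ^ (-(1 / a)) = (1 + s ^ a) ^ (-(1 / a) - 1) * (1 + s ^ a) := by
      have h := Real.rpow_add hv (-(1 / a) - 1) 1
      rw [Real.rpow_one] at h
      rw [show (-(1 / a) - 1 + 1 : ℝ) = -(1 / a) by ring] at h
      exact h
    have e2 : (1 + s ^ a) ^ (-(1 + 1 / a)) = (1 + s ^ a) ^ (-(1 / a) - 1) := by
      rw [show (-(1 + 1 / a) : ℝ) = -(1 / a) - 1 by ring]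
    rw [e2, e1]
    have := mul_le_mul_of_nonneg_left key1 hw
    nlinarith [this]
  · -- upper bound
    rw [hform, hphi, hphi']
    have hsub : phiA a (s ^ 2) * ‖B‖ ^ 2 + (2 * phiA' a (s ^ 2)) * p ^ 2
        ≤ (1 + s ^ a) ^ (-(1 / a)) * ‖B‖ ^ 2 := by
      rw [hphi, hphi']
      nlinarith [mul_nonneg (mul_nonneg hw hu) (sq_nonneg p)]
    have hkey := one_add_le_C2_mul ha hs
    have h1s : (0:ℝ) < 1 + s := by linarith
    have hCpos : (0:ℝ) ≤ max 1 (2 ^ (1 - 1 / a)) := le_trans zero_le_one (le_max_left _ _)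
    have hstep : (1 + s ^ a) ^ (-(1 / a)) ≤ max 1 (2 ^ (1 - 1 / a)) / (1 + s) := by
      rw [le_div_iff₀ h1s]
      calc (1 + s ^ a) ^ (-(1 / a)) * (1 + s)
          ≤ (1 + s ^ a) ^ (-(1 / a)) * (max 1 (2 ^ (1 - 1 / a)) * (1 + s ^ a) ^ (1 / a)) :=
            mul_le_mul_of_nonneg_left hkey (Real.rpow_nonneg hv.le _)
        _ = max 1 (2 ^ (1 - 1 / a)) * ((1 + s ^ a) ^ (-(1 / a)) * (1 + s ^ a) ^ (1 / a)) := by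
            ring
        _ = max 1 (2 ^ (1 - 1 / a)) := by
            rw [← Real.rpow_add hv]
            norm_num
    calc (1 + s ^ a) ^ (-(1 / a)) * ‖B‖ ^ 2 +
          -((1 + s ^ a) ^ (-(1 / a) - 1) * (s ^ 2) ^ (a / 2 - 1)) * p ^ 2
        ≤ (1 + s ^ a) ^ (-(1 / a)) * ‖B‖ ^ 2 := by
          nlinarith [mul_nonneg (mul_nonneg hw hu) (sq_nonneg p)]
      _ ≤ (max 1 (2 ^ (1 - 1 / a)) / (1 + s)) * ‖B‖ ^ 2 :=
          mul_le_mul_of_nonneg_right hstep (sq_nonneg _)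
      _ = max 1 (2 ^ (1 - 1 / a)) * ‖B‖ ^ 2 / (1 + s) := by ring
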